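/- The generalized Kropina change F̃ = F^{k+1}/β^k of an m-th root metric F = A^{1/m} is an AR-Finsler metric: its fundamental tensor satisfies g̃_{ij} = η̃·ã_{ij} with η̃ = A^{(2k+2−m)/m}/β^{2k} and ã_{ij} = (k(2k+1)/β²)A b_i b_j + ((k+1)/m)∂̇_i∂̇_j A + ((k+1)(2k−m+2)/(m²A))∂̇_iA∂̇_jA − (2k(k+1)/(mβ))(b_j∂̇_iA + b_i∂̇_jA), where ã_{ij} are rational functions in y, homogeneous of degree m−2. -/

import Mathlib

def IsRat {n : ℕ} (U : Set (Fin n → ℝ)) (f : (Fin n → ℝ) → ℝ) : Prop :=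
  ∃ P Q : MvPolynomial (Fin n) ℝ, Q ≠ 0 ∧
    ∀ y ∈ U, f y * MvPolynomial.eval y Q = MvPolynomial.eval y P

/-- Fiber partial derivative `∂̇_i`. -/
noncomputable def pd {n : ℕ} (i : Fin n) (f : (Fin n → ℝ) → ℝ) (y : Fin n → ℝ) : ℝ :=
  fderiv ℝ f y (Pi.single i 1)


open MvPolynomial in
lemma hasFDerivAt_eval {n : ℕ} (P : MvPolynomial (Fin n) ℝ) (y : Fin n → ℝ) :
    HasFDerivAt (fun z => eval z P)
      (∑ i, eval y (pderiv i P) • (ContinuousLinearMap.proj i : ((Fin n → ℝ)) →L[ℝ] ℝ)) y := by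
  induction P using MvPolynomial.induction_on with
  | C a => simpa using hasFDerivAt_const a y
  | add p q hp hq =>
      have : HasFDerivAt (fun z => eval z p + eval z q)
          (∑ i, eval y (pderiv i p) • (ContinuousLinearMap.proj i : (Fin n → ℝ) →L[ℝ] ℝ) + ∑ i, eval y (pderiv i q) • (ContinuousLinearMap.proj i : (Fin n → ℝ) →L[ℝ] ℝ)) y := hp.add hq
      convert this using 1
      · funext z; simp
      · simp [map_add, add_smul, Finset.sum_add_distrib]
  | mul_X p j hp =>
      have hX : HasFDerivAt (fun z : Fin n → ℝ => z j)
          (ContinuousLinearMap.proj j : ((Fin n → ℝ)) →L[ℝ] ℝ) y :=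
        hasFDerivAt_apply j y
      have : HasFDerivAt (fun z => eval z p * z j)
          (eval y p • (ContinuousLinearMap.proj j : (Fin n → ℝ) →L[ℝ] ℝ) + y j • ∑ i, eval y (pderiv i p) • (ContinuousLinearMap.proj i : (Fin n → ℝ) →L[ℝ] ℝ)) y := hp.mul hX
      convert this using 1
      · funext z; simp
      · ext v
        simp only [pderiv_mul, pderiv_X, map_add, map_mul, eval_X,
          ContinuousLinearMap.add_apply, ContinuousLinearMap.smul_apply,
          ContinuousLinearMap.sum_apply, ContinuousLinearMap.proj_apply, smul_eq_mul,
          Finset.mul_sum]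
        have hterm : ∀ x : Fin n, ((eval y) ((pderiv x) p) * y j
              + (eval y) p * (eval y) ((Pi.single x 1 : Fin n → MvPolynomial (Fin n) ℝ) j)) * v x
            = y j * ((eval y) (pderiv x p) * v x) + (if x = j then (eval y) p * v x else 0) := by
          intro x
          rcases eq_or_ne x j with h | h
          · subst h; simp [Pi.single_eq_same]; ring
          · simp [Pi.single_eq_of_ne h, h]; ring
        rw [Finset.sum_congr rfl fun x _ => hterm x, Finset.sum_add_distrib,
          Finset.sum_ite_eq' Finset.univ j (fun x => (eval y) p * v x)]
        simp [add_comm]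

open MvPolynomial in
lemma pd_eval {n : ℕ} (P : MvPolynomial (Fin n) ℝ) (i : Fin n) (y : Fin n → ℝ) :
    pd i (fun z => eval z P) y = eval y (pderiv i P) := by
  rw [pd, (hasFDerivAt_eval P y).fderiv]
  simp [Pi.single_apply, Finset.sum_ite_eq', eq_comm]

open MvPolynomial in
lemma differentiable_eval {n : ℕ} (P : MvPolynomial (Fin n) ℝ) :
    Differentiable ℝ (fun z : Fin n → ℝ => eval z P) :=
  fun y => (hasFDerivAt_eval P y).differentiableAt

lemma pd_scale {n d : ℕ} {f : (Fin n → ℝ) → ℝ} (hf : Differentiable ℝ f)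
    (hs : ∀ t : ℝ, t ≠ 0 → ∀ z, f (t • z) = t ^ d * f z) (i : Fin n)
    {t : ℝ} (ht : t ≠ 0) (z : Fin n → ℝ) :
    t * pd i f (t • z) = t ^ d * pd i f z := by
  set L : (Fin n → ℝ) →L[ℝ] (Fin n → ℝ) := t • ContinuousLinearMap.id ℝ (Fin n → ℝ) with hL
  have hLf : HasFDerivAt (fun w : Fin n → ℝ => t • w) L z := by
    have := L.hasFDerivAt (x := z)
    convert this using 1
    ext w; simp [hL]
  have h1 : HasFDerivAt (fun w : Fin n → ℝ => f (t • w)) ((fderiv ℝ f (t • z)).comp L) z :=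
    (hf (t • z)).hasFDerivAt.comp z hLf
  have h2 : HasFDerivAt (fun w : Fin n → ℝ => t ^ d * f w) (t ^ d • fderiv ℝ f z) z :=
    (hf z).hasFDerivAt.const_mul _
  have heq : (fun w : Fin n → ℝ => f (t • w)) = fun w => t ^ d * f w := funext fun w => hs t ht w
  rw [heq] at h1
  have := h1.unique h2
  have happ := congrArg (fun (M : (Fin n → ℝ) →L[ℝ] ℝ) => M (Pi.single i 1)) this
  simpa [pd, hL, mul_comm] using happ

open MvPolynomial

set_option maxHeartbeats 1600000

/-- The generalized Kropina change `F̃ = F^{k+1}/β^k` of an `m`-th root metric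
`F = A^{1/m}` is an AR-Finsler metric: its fundamental tensor
`g̃_{ij} = (1/2)∂̇_i∂̇_j F̃²` satisfies `g̃_{ij} = η̃ ã_{ij}` with
`η̃ = A^{(2k+2−m)/m}/β^{2k}` and
`ã_{ij} = (k(2k+1)/β²) A b_i b_j + ((k+1)/m) ∂̇_i∂̇_j A
        + ((k+1)(2k−m+2)/(m²A)) ∂̇_i A ∂̇_j A − (2k(k+1)/(mβ))(b_j ∂̇_i A + b_i ∂̇_j A)`,
where the `ã_{ij}` are rational in `y` and positively homogeneous of degree `m−2`. -/
theorem stmt18 {n m k : ℕ} (hm : 3 ≤ m) (hk : 0 < k)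
    (c : (Fin m → Fin n) → ℝ) (b : Fin n → ℝ)
    (A F β Ft : (Fin n → ℝ) → ℝ)
    (hA : ∀ y, A y = ∑ f : Fin m → Fin n, c f * ∏ t, y (f t))
    (hβ : ∀ y, β y = ∑ i, b i * y i)
    (U : Set (Fin n → ℝ)) (hU : U = {y : Fin n → ℝ | 0 < A y ∧ 0 < β y})
    (hF : ∀ y ∈ U, F y = A y ^ ((1 : ℝ) / m))
    (hFt : ∀ y ∈ U, Ft y = F y ^ (k + 1) / β y ^ k)
    (gt at' : Fin n → Fin n → (Fin n → ℝ) → ℝ) (ηt : (Fin n → ℝ) → ℝ)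
    (hgt : ∀ i j, ∀ y ∈ U, gt i j y = (1 / 2) * pd i (pd j (fun z => Ft z ^ 2)) y)
    (hηt : ∀ y ∈ U, ηt y = A y ^ ((2 * (k : ℝ) + 2 - m) / m) / β y ^ (2 * k))
    (hat : ∀ i j, ∀ y ∈ U, at' i j y
      = ((k : ℝ) * (2 * k + 1) / β y ^ 2) * A y * b i * b j
        + (((k : ℝ) + 1) / m) * pd i (pd j A) y
        + (((k : ℝ) + 1) * (2 * k - (m : ℝ) + 2) / ((m : ℝ) ^ 2 * A y))
          * pd i A y * pd j A y
        - (2 * (k : ℝ) * (k + 1) / ((m : ℝ) * β y))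
          * (b j * pd i A y + b i * pd j A y)) :
    (∀ i j, ∀ y ∈ U, gt i j y = ηt y * at' i j y)
    ∧ (∀ i j, IsRat U (at' i j))
    ∧ (∀ i j, ∀ t : ℝ, 0 < t → ∀ y ∈ U,
        at' i j (t • y) = t ^ ((m : ℝ) - 2) * at' i j y) := by
  classical
  have hm0 : (m : ℝ) ≠ 0 := Nat.cast_ne_zero.2 (by omega)
  set PA : MvPolynomial (Fin n) ℝ := ∑ f : Fin m → Fin n, C (c f) * ∏ t, X (f t) with hPAdef
  set Pβ : MvPolynomial (Fin n) ℝ := ∑ i, C (b i) * X i with hPβdef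
  have hPA : ∀ y, eval y PA = A y := by
    intro y; rw [hA, hPAdef]; simp
  have hPβ : ∀ y, eval y Pβ = β y := by
    intro y; rw [hβ, hPβdef]; simp
  have hAfun : A = fun z => eval z PA := funext fun y => (hPA y).symm
  have hβfun : β = fun z => eval z Pβ := funext fun y => (hPβ y).symm
  have hpdA : ∀ i y, pd i A y = eval y (pderiv i PA) := by
    intro i y; rw [hAfun]; exact pd_eval _ i y
  have hpdAfun : ∀ j, pd j A = fun z => eval z (pderiv j PA) :=
    fun j => funext fun y => hpdA j y
  have hpdpdA : ∀ i j y, pd i (pd j A) y = eval y (pderiv i (pderiv j PA)) := by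
    intro i j y; rw [hpdAfun j]; exact pd_eval _ i y
  have hpdβ : ∀ i y, pd i β y = b i := by
    intro i y
    rw [hβfun, pd_eval]
    rw [hPβdef]
    simp only [map_sum, pderiv_C_mul, pderiv_X]
    have : ∀ x : Fin n, eval y (C (b x) * (Pi.single i 1 : Fin n → MvPolynomial (Fin n) ℝ) x)
        = if x = i then b x else 0 := by
      intro x; rcases eq_or_ne x i with h | h
      · subst h; simp
      · simp [Pi.single_eq_of_ne h, h]
    rw [Finset.sum_congr rfl fun x _ => this x]
    simp
  have hAsc : ∀ (t : ℝ) (z : Fin n → ℝ), A (t • z) = t ^ m * A z := by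
    intro t z; rw [hA, hA, Finset.mul_sum]
    apply Finset.sum_congr rfl; intro f _
    have hp : ∏ t' : Fin m, (t • z) (f t') = t ^ m * ∏ t' : Fin m, z (f t') := by
      simp only [Pi.smul_apply, smul_eq_mul]
      rw [Finset.prod_mul_distrib, Finset.prod_const]
      simp
    rw [hp]; ring
  have hβsc : ∀ (t : ℝ) (z : Fin n → ℝ), β (t • z) = t * β z := by
    intro t z; rw [hβ, hβ, Finset.mul_sum]
    apply Finset.sum_congr rfl; intro i _; simp; ring
  have hdiffA : Differentiable ℝ A := by rw [hAfun]; exact differentiable_eval PA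
  have hdiffβ : Differentiable ℝ β := by rw [hβfun]; exact differentiable_eval Pβ
  have hA1 : ∀ (t : ℝ), t ≠ 0 → ∀ (z : Fin n → ℝ) (jj : Fin n),
      pd jj A (t • z) = t ^ (m-1) * pd jj A z := by
    intro t ht z jj
    have h := pd_scale hdiffA (fun t _ z => hAsc t z) jj ht z
    have hpm : t ^ m = t * t ^ (m-1) := by
      conv_lhs => rw [show m = (m-1)+1 by omega]
      rw [pow_succ]; ring
    apply mul_left_cancel₀ ht; rw [h, hpm]; ring
  have hA2 : ∀ (t : ℝ), t ≠ 0 → ∀ (z : Fin n → ℝ) (ii jj : Fin n),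
      pd ii (pd jj A) (t • z) = t ^ (m-2) * pd ii (pd jj A) z := by
    intro t ht z ii jj
    have hdiff2 : Differentiable ℝ (pd jj A) := by
      rw [hpdAfun jj]; exact differentiable_eval _
    have h := pd_scale (d := m-1) hdiff2 (fun t ht z => hA1 t ht z jj) ii ht z
    have hpm : t ^ (m-1) = t * t ^ (m-2) := by
      conv_lhs => rw [show m-1 = (m-2)+1 by omega]
      rw [pow_succ]; ring
    apply mul_left_cancel₀ ht; rw [h, hpm]; ring
  have hUopen : IsOpen U := by
    rw [hU, Set.setOf_and]
    exact ((isOpen_lt continuous_const hdiffA.continuous).inter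
      (isOpen_lt continuous_const hdiffβ.continuous))
  refine ⟨?_, ?_, ?_⟩
  · -- part 1
    intro i j y hy
    have hy' : 0 < A y ∧ 0 < β y := by rw [hU] at hy; exact hy
    have ha := hy'.1
    have hw := hy'.2
    set p : ℝ := 2*((k:ℝ)+1)/(m:ℝ) with hp
    set q : ℝ := 2*(k:ℝ) with hq
    set u : (Fin n → ℝ) → ℝ := fun z => eval z (pderiv j PA) with hu
    have hdiffu : Differentiable ℝ u := differentiable_eval _
    have huA : ∀ z, u z = pd j A z := fun z => (hpdA j z).symm
    have hFt2G : ∀ z ∈ U, Ft z ^ 2 = A z ^ p * β z ^ (-q) := by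
      intro z hz
      have hz' : 0 < A z ∧ 0 < β z := by rw [hU] at hz; exact hz
      rw [hFt z hz, hF z hz]
      rw [div_pow, ← pow_mul, ← pow_mul]
      rw [← Real.rpow_natCast (A z ^ ((1:ℝ)/m)) ((k+1)*2), ← Real.rpow_mul (le_of_lt hz'.1)]
      rw [← Real.rpow_natCast (β z) (k*2)]
      rw [Real.rpow_neg (le_of_lt hz'.2), ← div_eq_mul_inv]
      congr 1
      · congr 1; rw [hp]; push_cast; field_simp
      · congr 1; rw [hq]; push_cast; ring
    have hGpd : ∀ z ∈ U, pd j (fun w => A w ^ p * β w ^ (-q)) z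
        = p * (A z ^ (p-1) * β z ^ (-q) * u z) - q * (A z ^ p * β z ^ (-q-1) * b j) := by
      intro z hz
      have hz' : 0 < A z ∧ 0 < β z := by rw [hU] at hz; exact hz
      have h1 : HasFDerivAt (fun w => A w ^ p) ((p * A z ^ (p-1)) • fderiv ℝ A z) z :=
        (hdiffA z).hasFDerivAt.rpow_const (Or.inl (ne_of_gt hz'.1))
      have h2 : HasFDerivAt (fun w => β w ^ (-q)) ((-q * β z ^ (-q-1)) • fderiv ℝ β z) z :=
        (hdiffβ z).hasFDerivAt.rpow_const (Or.inl (ne_of_gt hz'.2))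
      have h3 := h1.mul h2
      have h3' : HasFDerivAt (fun w => A w ^ p * β w ^ (-q)) _ z := h3
      rw [pd, h3'.fderiv]
      have hb := hpdβ j z
      rw [pd] at hb
      simp only [ContinuousLinearMap.add_apply, ContinuousLinearMap.smul_apply, smul_eq_mul, hb]
      have hA' : fderiv ℝ A z (Pi.single j 1) = pd j A z := rfl
      rw [hA', ← huA z]
      ring
    have hpdFtG : ∀ z ∈ U, pd j (fun w => Ft w ^ 2) z
        = pd j (fun w => A w ^ p * β w ^ (-q)) z := by
      intro z hz
      have hev : (fun w => Ft w ^ 2) =ᶠ[nhds z] (fun w => A w ^ p * β w ^ (-q)) :=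
        Filter.eventuallyEq_of_mem (hUopen.mem_nhds hz) (fun w hw => hFt2G w hw)
      rw [pd, pd, hev.fderiv_eq]
    have h2nd : pd i (pd j (fun w => Ft w ^ 2)) y
        = pd i (fun z => p * (A z ^ (p-1) * β z ^ (-q) * u z)
            - q * (A z ^ p * β z ^ (-q-1) * b j)) y := by
      have hev : (pd j (fun w => Ft w ^ 2)) =ᶠ[nhds y]
          (fun z => p * (A z ^ (p-1) * β z ^ (-q) * u z)
            - q * (A z ^ p * β z ^ (-q-1) * b j)) :=
        Filter.eventuallyEq_of_mem (hUopen.mem_nhds hy)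
          (fun z hz => by rw [hpdFtG z hz, hGpd z hz])
      rw [pd, pd, hev.fderiv_eq]
    have hEval : pd i (fun z => p * (A z ^ (p-1) * β z ^ (-q) * u z)
            - q * (A z ^ p * β z ^ (-q-1) * b j)) y
        = p * (((p-1) * A y ^ (p-2) * pd i A y * β y ^ (-q)
              + A y ^ (p-1) * ((-q) * β y ^ (-q-1) * b i)) * u y
             + A y ^ (p-1) * β y ^ (-q) * pd i u y)
          - q * ((p * A y ^ (p-1) * pd i A y * β y ^ (-q-1)
              + A y ^ p * ((-q-1) * β y ^ (-q-2) * b i)) * b j) := by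
      have hDA := (hdiffA y).hasFDerivAt
      have hDb := (hdiffβ y).hasFDerivAt
      have hDu := (hdiffu y).hasFDerivAt
      have h1 : HasFDerivAt (fun w => A w ^ (p-1)) (((p-1) * A y ^ (p-1-1)) • fderiv ℝ A y) y :=
        hDA.rpow_const (Or.inl (ne_of_gt ha))
      have h2 : HasFDerivAt (fun w => β w ^ (-q)) ((-q * β y ^ (-q-1)) • fderiv ℝ β y) y :=
        hDb.rpow_const (Or.inl (ne_of_gt hw))
      have h3 : HasFDerivAt (fun w => A w ^ p) ((p * A y ^ (p-1)) • fderiv ℝ A y) y :=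
        hDA.rpow_const (Or.inl (ne_of_gt ha))
      have h4 : HasFDerivAt (fun w => β w ^ (-q-1)) (((-q-1) * β y ^ (-q-1-1)) • fderiv ℝ β y) y :=
        hDb.rpow_const (Or.inl (ne_of_gt hw))
      have t1 := (((h1.mul h2).mul hDu).const_mul p)
      have t2 := (((h3.mul h4).mul_const (b j)).const_mul q)
      have hE := t1.sub t2
      have hE' : HasFDerivAt (fun z => p * (A z ^ (p-1) * β z ^ (-q) * u z)
              - q * (A z ^ p * β z ^ (-q-1) * b j)) _ y := hE
      rw [pd, hE'.fderiv]
      have hbi := hpdβ i y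
      rw [pd] at hbi
      simp only [ContinuousLinearMap.coe_sub', Pi.sub_apply, ContinuousLinearMap.add_apply,
        ContinuousLinearMap.smul_apply, ContinuousLinearMap.coe_smul', Pi.smul_apply,
        smul_eq_mul, hbi, Pi.mul_apply]
      have hAi : fderiv ℝ A y (Pi.single i 1) = pd i A y := rfl
      have hui : fderiv ℝ u y (Pi.single i 1) = pd i u y := rfl
      rw [hAi, hui]
      have e1 : -q-1-1 = -q-2 := by ring
      have e2 : p-1-1 = p-2 := by ring
      rw [e1, e2]
      ring
    have hpdiu : pd i u y = pd i (pd j A) y := by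
      rw [hu, pd_eval]; exact (hpdpdA i j y).symm
    rw [hgt i j y hy, h2nd, hEval, hηt y hy, hat i j y hy, hpdiu, huA y]
    have hap : A y ^ p = A y ^ (p-1) * A y := by
      rw [← Real.rpow_add_one (ne_of_gt ha)]; congr 1; ring
    have hap2 : A y ^ (p-2) = A y ^ (p-1) / A y := by
      rw [eq_div_iff (ne_of_gt ha), ← Real.rpow_add_one (ne_of_gt ha)]; congr 1; ring
    have hw1 : β y ^ (-q-1) = β y ^ (-q) / β y := by
      rw [eq_div_iff (ne_of_gt hw), ← Real.rpow_add_one (ne_of_gt hw)]; congr 1; ring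
    have hw2 : β y ^ (-q-2) = β y ^ (-q) / β y ^ 2 := by
      rw [eq_div_iff (pow_ne_zero 2 (ne_of_gt hw)), ← Real.rpow_natCast (β y) 2,
        ← Real.rpow_add hw]
      congr 1; push_cast; ring
    have hη2 : A y ^ ((2*(k:ℝ)+2-m)/m) / β y ^ (2*k) = A y ^ (p-1) * β y ^ (-q) := by
      rw [Real.rpow_neg (le_of_lt hw), div_eq_mul_inv]
      congr 1
      · congr 1; rw [hp]; field_simp
      · congr 1
        rw [← Real.rpow_natCast (β y) (2*k)]
        congr 1; rw [hq]; push_cast; ring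
    rw [hap, hap2, hw1, hw2, hη2]
    set X := A y ^ (p-1)
    set W := β y ^ (-q)
    rw [hp, hq]
    field_simp
    ring
  · -- part 2
    intro i j
    rcases Set.eq_empty_or_nonempty U with hUe | ⟨y₀, hy₀⟩
    · exact ⟨0, 1, one_ne_zero, by simp [hUe]⟩
    have hy₀' : 0 < A y₀ ∧ 0 < β y₀ := by rw [hU] at hy₀; exact hy₀
    have hPA0 : PA ≠ 0 := by
      intro h
      have := hPA y₀
      rw [h] at this; simp at this
      rw [← this] at hy₀'; exact lt_irrefl 0 hy₀'.1
    have hPβ0 : Pβ ≠ 0 := by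
      intro h
      have := hPβ y₀
      rw [h] at this; simp at this
      rw [← this] at hy₀'; exact lt_irrefl 0 hy₀'.2
    have hC : (C ((m:ℝ)^2) : MvPolynomial (Fin n) ℝ) ≠ 0 := by
      simpa using pow_ne_zero 2 hm0
    refine ⟨C ((k:ℝ)*(2*(k:ℝ)+1)*(b i)*(b j)*(m:ℝ)^2) * PA^2
      + C (((k:ℝ)+1)*(m:ℝ)) * (pderiv i (pderiv j PA) * (PA * Pβ^2))
      + C (((k:ℝ)+1)*(2*(k:ℝ)-(m:ℝ)+2)) * (pderiv i PA * pderiv j PA * Pβ^2)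
      - C (2*(k:ℝ)*((k:ℝ)+1)*(m:ℝ)) * ((C (b j) * pderiv i PA + C (b i) * pderiv j PA) * (PA * Pβ)),
      C ((m:ℝ)^2) * (PA * Pβ^2),
      mul_ne_zero hC (mul_ne_zero hPA0 (pow_ne_zero 2 hPβ0)), ?_⟩
    intro y hy
    have hy' : 0 < A y ∧ 0 < β y := by rw [hU] at hy; exact hy
    rw [hat i j y hy]
    simp only [map_mul, map_add, map_sub, map_pow, eval_C, hPA y, hPβ y,
      ← hpdA, ← hpdpdA]
    field_simp [ne_of_gt hy'.1, ne_of_gt hy'.2]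
  · -- part 3
    intro i j t ht y hy
    have hy' : 0 < A y ∧ 0 < β y := by rw [hU] at hy; exact hy
    have htne : t ≠ 0 := ne_of_gt ht
    have hmem : t • y ∈ U := by
      rw [hU]
      exact ⟨by rw [hAsc]; exact mul_pos (pow_pos ht m) hy'.1,
             by rw [hβsc]; exact mul_pos ht hy'.2⟩
    rw [hat i j _ hmem, hat i j y hy]
    rw [hAsc, hβsc, hA1 t htne y i, hA1 t htne y j, hA2 t htne y i j]
    have hr : t ^ ((m:ℝ) - 2) = t ^ (m - 2 : ℕ) := by
      rw [show ((m:ℝ) - 2) = ((m - 2 : ℕ) : ℝ) by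
        push_cast [Nat.cast_sub (by omega : 2 ≤ m)]; ring]
      exact Real.rpow_natCast t (m-2)
    rw [hr]
    have h2 : t ^ m = t ^ (m-2) * t^2 := by rw [← pow_add]; congr 1; omega
    have h1 : t ^ (m-1) = t ^ (m-2) * t := by rw [show m-1 = (m-2)+1 by omega, pow_succ]
    rw [h2, h1]
    have ha := hy'.1
    have hw := hy'.2
    have hT : t ^ (m-2) ≠ 0 := pow_ne_zero _ htne
    field_simp
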